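/- Let x, y, w be three affinely independent points in the Euclidean plane ℝ², let z be their circumcenter, and let p > 0. If the angle of the triangle xyw at y is at least a right angle (i.e., the inner product ⟨x − y, w − y⟩ ≤ 0) and dist(y,w) ≥ 2p, then the Euclidean distance from z to the line through x and y is at least p. -/

import Mathlib

/-- Obtuse-angle case in the proof of Lemma 6.6: if `z` is the circumcenter of the
triangle `xyw`, the angle at `y` is at least a right angle, and `yw` has length at
least `2p`, then `z` is at distance at least `p` from the line through `x` and `y`. -/
theorem stmt_10 (x y w z : EuclideanSpace ℝ (Fin 2)) (p : ℝ) (hp : 0 < p)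
    (hindep : AffineIndependent ℝ ![x, y, w])
    (hzx : dist z x = dist z y) (hzw : dist z x = dist z w)
    (hangle : (inner ℝ (x - y) (w - y) : ℝ) ≤ 0)
    (hyw : 2 * p ≤ dist y w) :
    p ≤ Metric.infDist z (affineSpan ℝ {x, y} : Set (EuclideanSpace ℝ (Fin 2))) := by
  have hx : x ∈ affineSpan ℝ ({x, y} : Set (EuclideanSpace ℝ (Fin 2))) :=
    mem_affineSpan ℝ (by simp)
  rw [← not_lt, Metric.infDist_lt_iff ⟨x, hx⟩]
  push_neg
  intro q hq
  have hd : q -ᵥ x ∈ (affineSpan ℝ ({x, y} : Set (EuclideanSpace ℝ (Fin 2)))).direction :=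
    AffineSubspace.vsub_mem_direction hq hx
  rw [direction_affineSpan, mem_vectorSpan_pair] at hd
  obtain ⟨t, ht⟩ := hd
  have hqe : q = t • (x - y) + x := by
    have h2 : t • (x - y) = q - x := ht
    rw [h2]; abel
  subst hqe
  -- pass to norms
  have e1 : dist z (t • (x - y) + x) = ‖(z - x) - t • (x - y)‖ := by
    rw [dist_eq_norm]
    congr 1
    abel
  have hxw : ‖x - w‖ ^ 2 = ‖x - y‖ ^ 2 - 2 * (inner ℝ (x - y) (w - y) : ℝ) + ‖w - y‖ ^ 2 := by
    have := @norm_sub_sq_real (EuclideanSpace ℝ (Fin 2)) _ _ (x - y) (w - y)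
    rwa [sub_sub_sub_cancel_right] at this
  have htri : ‖x - w‖ ≤ ‖x - z‖ + ‖z - w‖ := by
    have := norm_add_le (x - z) (z - w)
    rwa [sub_add_sub_cancel] at this
  have hzx' : ‖z - x‖ = ‖z - y‖ := by rwa [dist_eq_norm, dist_eq_norm] at hzx
  have hzw' : ‖z - x‖ = ‖z - w‖ := by rwa [dist_eq_norm, dist_eq_norm] at hzw
  have hyw' : 2 * p ≤ ‖y - w‖ := by rwa [dist_eq_norm] at hyw
  -- inner (z - x) (y - x) = ‖y - x‖^2 / 2
  have hmid : 2 * (inner ℝ (z - x) (y - x) : ℝ) = ‖y - x‖ ^ 2 := by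
    have h := @norm_sub_sq_real (EuclideanSpace ℝ (Fin 2)) _ _ (z - x) (y - x)
    rw [sub_sub_sub_cancel_right] at h
    rw [← hzx'] at h
    linarith
  have hexp : ‖(z - x) - t • (x - y)‖ ^ 2
      = ‖z - x‖ ^ 2 + 2 * t * (inner ℝ (z - x) (y - x) : ℝ) + t ^ 2 * ‖y - x‖ ^ 2 := by
    rw [@norm_sub_sq_real (EuclideanSpace ℝ (Fin 2)) _ _ (z - x) (t • (x - y)),
      real_inner_smul_right, norm_smul]
    have hne : (inner ℝ (z - x) (x - y) : ℝ) = -(inner ℝ (z - x) (y - x) : ℝ) := by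
      rw [show x - y = -(y - x) by abel, inner_neg_right]
    rw [hne, show ‖x - y‖ = ‖y - x‖ from norm_sub_rev x y, Real.norm_eq_abs, mul_pow, sq_abs]
    ring
  have hxw2 : ‖x - w‖ ^ 2 ≤ (2 * ‖z - x‖) ^ 2 := by
    have h2 : ‖x - w‖ ≤ 2 * ‖z - x‖ := by
      rw [show ‖x - z‖ = ‖z - x‖ from norm_sub_rev x z, hzw'] at htri
      linarith [htri, hzw'.symm.le]
    exact pow_le_pow_left₀ (norm_nonneg _) h2 2
  have hyw2 : (2 * p) ^ 2 ≤ ‖w - y‖ ^ 2 := by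
    rw [show ‖w - y‖ = ‖y - w‖ from norm_sub_rev w y]
    exact pow_le_pow_left₀ (by linarith) hyw' 2
  have hnyx : ‖x - y‖ = ‖y - x‖ := norm_sub_rev x y
  rw [e1]
  have hn4 : (0:ℝ) ≤ ‖(z - x) - t • (x - y)‖ := norm_nonneg _
  have h2m : (inner ℝ (z - x) (y - x) : ℝ) = ‖y - x‖ ^ 2 / 2 := by linarith
  have hexp2 : ‖(z - x) - t • (x - y)‖ ^ 2
      = ‖z - x‖ ^ 2 + t * ‖y - x‖ ^ 2 + t ^ 2 * ‖y - x‖ ^ 2 := by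
    rw [hexp, h2m]; ring
  have hnyx2 : ‖x - y‖ ^ 2 = ‖y - x‖ ^ 2 := by rw [hnyx]
  have key : p ^ 2 ≤ ‖(z - x) - t • (x - y)‖ ^ 2 := by
    nlinarith [mul_nonneg (sq_nonneg (2*t+1)) (sq_nonneg ‖y - x‖), hexp2, hxw, hxw2,
      hyw2, hangle, hnyx2]
  exact le_of_pow_le_pow_left₀ (by norm_num) hn4 key
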